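/- Let n ≥ 1, let S_n be the star graph on vertices {0,1,...,n-1}, and let α be a partial weak endomorphism of S_n. If α is a regular element of the monoid PwEnd(S_n) of all partial weak endomorphisms of S_n under composition, then 0 ∈ dom(α) or im(α) = {0} or 0 ∉ im(α). -/

import Mathlib

def pmul {V : Type*} (f g : V → Option V) : V → Option V := fun x => (f x).bind g

def pdom {V : Type*} (f : V → Option V) : Set V := {x | f x ≠ none}

def pim {V : Type*} (f : V → Option V) : Set V := {y | ∃ x, f x = some y}

def pker {V : Type*} (f : V → Option V) : V → V → Prop := fun x y => f x ≠ none ∧ f x = f y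

def PInj {V : Type*} (f : V → Option V) : Prop := ∀ u v a, f u = some a → f v = some a → u = v

def edge {n : ℕ} (u v : Fin n) : Prop := (u.val = 0 ∧ v.val ≠ 0) ∨ (v.val = 0 ∧ u.val ≠ 0)

def IsPEnd {n : ℕ} (α : Fin n → Option (Fin n)) : Prop :=
  ∀ u v a b, α u = some a → α v = some b → edge u v → edge a b

def IsPwEnd {n : ℕ} (α : Fin n → Option (Fin n)) : Prop :=
  ∀ u v a b, α u = some a → α v = some b → edge u v → a ≠ b → edge a b

def IsPsEnd {n : ℕ} (α : Fin n → Option (Fin n)) : Prop :=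
  ∀ u v a b, α u = some a → α v = some b → (edge u v ↔ edge a b)

def IsPswEnd {n : ℕ} (α : Fin n → Option (Fin n)) : Prop :=
  ∀ u v a b, α u = some a → α v = some b → ((edge u v ∧ a ≠ b) ↔ edge a b)

def PEndS (n : ℕ) : Set (Fin n → Option (Fin n)) := {α | IsPEnd α}
def PwEndS (n : ℕ) : Set (Fin n → Option (Fin n)) := {α | IsPwEnd α}
def PsEndS (n : ℕ) : Set (Fin n → Option (Fin n)) := {α | IsPsEnd α}
def PswEndS (n : ℕ) : Set (Fin n → Option (Fin n)) := {α | IsPswEnd α}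
def IEndS (n : ℕ) : Set (Fin n → Option (Fin n)) := {α | PInj α ∧ IsPEnd α}
def PAutS (n : ℕ) : Set (Fin n → Option (Fin n)) := {α | PInj α ∧ IsPsEnd α}

def RegularIn {V : Type*} (M : Set (V → Option V)) (a : V → Option V) : Prop :=
  ∃ b ∈ M, pmul (pmul a b) a = a

def GreenL {V : Type*} (M : Set (V → Option V)) (a b : V → Option V) : Prop :=
  (∃ g ∈ M, a = pmul g b) ∧ (∃ g ∈ M, b = pmul g a)

def GreenR {V : Type*} (M : Set (V → Option V)) (a b : V → Option V) : Prop :=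
  (∃ g ∈ M, a = pmul b g) ∧ (∃ g ∈ M, b = pmul a g)

def GreenH {V : Type*} (M : Set (V → Option V)) (a b : V → Option V) : Prop :=
  GreenL M a b ∧ GreenR M a b

def GreenJ {V : Type*} (M : Set (V → Option V)) (a b : V → Option V) : Prop :=
  (∃ g ∈ M, ∃ h ∈ M, a = pmul (pmul g b) h) ∧ (∃ g ∈ M, ∃ h ∈ M, b = pmul (pmul g a) h)

theorem stmt10 (n : ℕ) (hn : 1 ≤ n) (α : Fin n → Option (Fin n))
    (hα : α ∈ PwEndS n) (hreg : RegularIn (PwEndS n) α) :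
    (⟨0, hn⟩ : Fin n) ∈ pdom α ∨ pim α = {(⟨0, hn⟩ : Fin n)} ∨ (⟨0, hn⟩ : Fin n) ∉ pim α := by
  by_contra h
  push_neg at h
  obtain ⟨hdom, hne, him⟩ := h
  simp only [pdom, Set.mem_setOf_eq, not_not] at hdom
  obtain ⟨x, hx⟩ := him
  -- get c in im α with c ≠ 0
  have hsub : ¬ pim α ⊆ {(⟨0, hn⟩ : Fin n)} := by
    intro hs
    apply hne
    apply Set.Subset.antisymm hs
    intro z hz
    simp at hz
    subst hz
    exact ⟨x, hx⟩
  obtain ⟨c, hcim, hc0⟩ := Set.not_subset.mp hsub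
  obtain ⟨y, hy⟩ := hcim
  simp only [Set.mem_singleton_iff] at hc0
  obtain ⟨β, hβ, heq⟩ := hreg
  have hx' : pmul (pmul α β) α x = some (⟨0, hn⟩ : Fin n) := by rw [heq]; exact hx
  have hy' : pmul (pmul α β) α y = some c := by rw [heq]; exact hy
  simp only [pmul, hx, Option.bind_some] at hx'
  simp only [pmul, hy, Option.bind_some] at hy'
  obtain ⟨w, hw1, hw2⟩ := Option.bind_eq_some_iff.mp hx'
  obtain ⟨w', hw1', hw2'⟩ := Option.bind_eq_some_iff.mp hy'
  have hcv : c.val ≠ 0 := fun h => hc0 (Fin.ext h)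
  have hedge : edge (⟨0, hn⟩ : Fin n) c := Or.inl ⟨rfl, hcv⟩
  have hne' : w ≠ w' := by
    intro h
    rw [h, hw2'] at hw2
    exact hc0 (Option.some_injective _ hw2)
  have hww : edge w w' := hβ _ _ _ _ hw1 hw1' hedge hne'
  have h0 : ∀ z : Fin n, z.val = 0 → z = (⟨0, hn⟩ : Fin n) := fun z hz => Fin.ext hz
  rcases hww with ⟨hw0, _⟩ | ⟨hw0, _⟩
  · rw [h0 w hw0, hdom] at hw2; exact nomatch hw2
  · rw [h0 w' hw0, hdom] at hw2'; exact nomatch hw2'
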